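/- For any edge-probabilities p = p(n) and q = q(n) with p, q ∈ (0,1), there exists a coupling of the binomial random graphs G(n,p) and G(n,q) such that P(G(n,p) = G(n,q)) ≥ 1 - n·|p - q|/√(4q(1-q)). -/

import Mathlib

open MeasureTheory

/-- The distribution of i.i.d. Bernoulli(p) indicators indexed by `α`:
the model of a binomial random graph when `α` is the set of potential edges. -/
noncomputable def productBernoulli (α : Type) [Fintype α] [DecidableEq α] (p : ℝ) :
    Measure (α → Bool) :=
  ∑ f : α → Bool,
    (∏ a : α, if f a then ENNReal.ofReal p else ENNReal.ofReal (1 - p)) • Measure.dirac f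

/-- The potential edges of a graph on vertex set `Fin n`. -/
abbrev EdgeSet (n : ℕ) := {e : Sym2 (Fin n) // ¬ e.IsDiag}

/-- `u` and `v` are adjacent in the graph encoded by `f`. -/
def Adj {n : ℕ} (f : EdgeSet n → Bool) (u v : Fin n) : Prop :=
  ∃ h : ¬ (s(u, v) : Sym2 (Fin n)).IsDiag, f ⟨s(u, v), h⟩ = true

/-- `A` is a dominating set of the graph encoded by `f`. -/
def Dominates {n : ℕ} (f : EdgeSet n → Bool) (A : Finset (Fin n)) : Prop :=
  ∀ v : Fin n, v ∉ A → ∃ a ∈ A, Adj f v a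

namespace CPL

/-! ### Elementary combinatorial/analytic lemmas -/

variable {α : Type} [Fintype α] [DecidableEq α]

/-- Bernoulli weight. -/
def W (p : ℝ) (t : Bool) : ℝ := if t then p else 1 - p

lemma W_pos {p : ℝ} (hp : p ∈ Set.Ioo (0:ℝ) 1) (t : Bool) : 0 < W p t := by
  cases t <;> simp [W] <;> [linarith [hp.2]; exact hp.1]

/-- probability of a configuration `f`. -/
noncomputable def Pr (p : ℝ) (f : α → Bool) : ℝ := ∏ a, W p (f a)

lemma Pr_pos {p : ℝ} (hp : p ∈ Set.Ioo (0:ℝ) 1) (f : α → Bool) : 0 < Pr p f :=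
  Finset.prod_pos fun a _ => W_pos hp _

lemma sum_prod_W (v : α → Bool → ℝ) :
    ∑ f : α → Bool, ∏ a, v a (f a) = ∏ a, (v a true + v a false) := by
  rw [← Fintype.prod_sum]
  congr 1; ext a
  simp [Fintype.sum_bool]

lemma sum_Pr {p : ℝ} : ∑ f : α → Bool, Pr (α := α) p f = 1 := by
  rw [show (∑ f : α → Bool, Pr p f) = ∑ f : α → Bool, ∏ a, W p (f a) from rfl,
    sum_prod_W]
  simp [W]

lemma sum_Pr_mul {p : ℝ} (a₀ : α) (L : Bool → ℝ) :
    ∑ f : α → Bool, Pr p f * L (f a₀) = p * L true + (1 - p) * L false := by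
  have h : ∀ f : α → Bool, Pr p f * L (f a₀)
      = ∏ a, (W p (f a) * (if a = a₀ then L (f a) else 1)) := by
    intro f
    rw [Finset.prod_mul_distrib]
    congr 1
    rw [Finset.prod_ite_eq' Finset.univ a₀ (fun a => L (f a))]
    simp
  simp_rw [h]
  rw [sum_prod_W (fun a t => W p t * if a = a₀ then L t else 1)]
  rw [Finset.prod_eq_single a₀]
  · simp [W]
  · intro b _ hb; simp [hb, W]
  · simp

/-- single-coordinate KL divergence -/
noncomputable def kl (p q : ℝ) : ℝ :=
  p * Real.log (p / q) + (1 - p) * Real.log ((1 - p) / (1 - q))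

lemma KL_tensor {p q : ℝ} (hp : p ∈ Set.Ioo (0:ℝ) 1) (hq : q ∈ Set.Ioo (0:ℝ) 1) :
    ∑ f : α → Bool, Pr p f * Real.log (Pr p f / Pr q f)
      = (Fintype.card α : ℝ) * kl p q := by
  have hlog : ∀ f : α → Bool,
      Real.log (Pr p f / Pr q f) = ∑ a, Real.log (W p (f a) / W q (f a)) := by
    intro f
    rw [show Pr p f / Pr q f = ∏ a, (W p (f a) / W q (f a)) by
      rw [Finset.prod_div_distrib]; rfl]
    exact Real.log_prod fun a _ =>
      div_ne_zero (W_pos hp _).ne' (W_pos hq _).ne'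
  simp_rw [hlog, Finset.mul_sum]
  rw [Finset.sum_comm]
  have : ∀ a₀ : α, ∑ f : α → Bool, Pr p f * Real.log (W p (f a₀) / W q (f a₀)) = kl p q := by
    intro a₀
    rw [sum_Pr_mul a₀ (fun t => Real.log (W p t / W q t))]
    simp [kl, W]
  simp_rw [this]
  simp [Finset.card_univ]

lemma kl_le_chi2 {p q : ℝ} (hp : p ∈ Set.Ioo (0:ℝ) 1) (hq : q ∈ Set.Ioo (0:ℝ) 1) :
    kl p q ≤ (p - q)^2 / (q * (1 - q)) := by
  obtain ⟨hp0, hp1⟩ := hp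
  obtain ⟨hq0, hq1⟩ := hq
  have h1 : Real.log (p / q) ≤ p / q - 1 :=
    Real.log_le_sub_one_of_pos (by positivity)
  have h2 : Real.log ((1 - p) / (1 - q)) ≤ (1 - p) / (1 - q) - 1 :=
    Real.log_le_sub_one_of_pos (by apply div_pos <;> linarith)
  have hq0' : (0:ℝ) < 1 - q := by linarith
  have : kl p q ≤ p * (p / q - 1) + (1 - p) * ((1 - p) / (1 - q) - 1) := by
    unfold kl
    have := mul_le_mul_of_nonneg_left h1 hp0.le
    have := mul_le_mul_of_nonneg_left h2 (by linarith : (0:ℝ) ≤ 1 - p)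
    linarith
  refine this.trans (le_of_eq ?_)
  field_simp
  ring

/-! ### Pinsker's inequality for finite distributions -/

/-- derivative helper -/
noncomputable def Gf (b x : ℝ) : ℝ :=
  Real.log x - Real.log b - Real.log (1 - x) + Real.log (1 - b) - 4 * (x - b)

/-- split form of the two-point Pinsker function -/
noncomputable def Ff (b x : ℝ) : ℝ :=
  x * (Real.log x - Real.log b) + ((1 - x) * Real.log (1 - x) - (1 - x) * Real.log (1 - b))
    - 2 * (x - b) ^ 2

lemma hasDerivAt_Gf {b x : ℝ} (hx0 : 0 < x) (hx1 : x < 1) :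
    HasDerivAt (Gf b) (1 / x + 1 / (1 - x) - 4) x := by
  have h1 : HasDerivAt (fun x : ℝ => Real.log (1 - x)) (-(1 / (1 - x))) x := by
    have := ((Real.hasDerivAt_log (by linarith : (1:ℝ) - x ≠ 0)).comp x
      ((hasDerivAt_id x).const_sub 1))
    simpa [div_eq_mul_inv, Function.comp_def] using this
  have h2 : HasDerivAt (fun x : ℝ => 4 * (x - b)) 4 x := by
    simpa using ((hasDerivAt_id x).sub_const b).const_mul 4
  have := (((Real.hasDerivAt_log hx0.ne').sub_const (Real.log b)).sub h1).add_const
    (Real.log (1 - b)) |>.sub h2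
  refine this.congr_deriv ?_
  ring

lemma hasDerivAt_Ff {b x : ℝ} (hx0 : 0 < x) (hx1 : x < 1) :
    HasDerivAt (Ff b) (Gf b x) x := by
  have h1 : HasDerivAt (fun x : ℝ => x * (Real.log x - Real.log b))
      (1 * (Real.log x - Real.log b) + x * x⁻¹) x :=
    (hasDerivAt_id x).mul ((Real.hasDerivAt_log hx0.ne').sub_const (Real.log b))
  have hu : HasDerivAt (fun x : ℝ => (1 : ℝ) - x) (-1) x := (hasDerivAt_id x).const_sub 1
  have h2' : HasDerivAt (fun x : ℝ => Real.log (1 - x)) ((1 - x)⁻¹ * (-1)) x := by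
    simpa [Function.comp_def] using
      (Real.hasDerivAt_log (by linarith : (1:ℝ) - x ≠ 0)).comp x hu
  have h2 : HasDerivAt (fun x : ℝ => (1 - x) * Real.log (1 - x))
      ((-1) * Real.log (1 - x) + (1 - x) * ((1 - x)⁻¹ * (-1))) x := hu.mul h2'
  have h3 : HasDerivAt (fun x : ℝ => (1 - x) * Real.log (1 - b)) ((-1) * Real.log (1 - b)) x :=
    hu.mul_const _
  have h4 : HasDerivAt (fun x : ℝ => 2 * (x - b) ^ 2) (2 * (2 * (x - b))) x := by
    have := (((hasDerivAt_id x).sub_const b).pow 2).const_mul 2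
    simpa using this
  have := (h1.add (h2.sub h3)).sub h4
  refine this.congr_deriv ?_
  unfold Gf
  have hx' : (1:ℝ) - x ≠ 0 := by linarith
  rw [mul_inv_cancel₀ hx0.ne', mul_inv_cancel_left₀ hx']
  ring

lemma Gf_nonneg {b x : ℝ} (hb : 0 < b) (hbx : b ≤ x) (hx1 : x < 1) : 0 ≤ Gf b x := by
  have hmono : MonotoneOn (Gf b) (Set.Icc b x) := by
    apply monotoneOn_of_hasDerivWithinAt_nonneg (convex_Icc b x)
      (f' := fun y => 1 / y + 1 / (1 - y) - 4)
    · unfold Gf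
      have hsub1 : Set.Icc b x ⊆ {(0:ℝ)}ᶜ := fun y hy => by
        simp only [Set.mem_compl_iff, Set.mem_singleton_iff]
        exact (lt_of_lt_of_le hb hy.1).ne'
      have hmaps : Set.MapsTo (fun y : ℝ => 1 - y) (Set.Icc b x) {(0:ℝ)}ᶜ := fun y hy => by
        simp only [Set.mem_compl_iff, Set.mem_singleton_iff]
        have : y < 1 := lt_of_le_of_lt hy.2 hx1
        intro h; linarith [sub_eq_zero.mp h]
      exact ((((Real.continuousOn_log.mono hsub1).sub continuousOn_const).sub
        (Real.continuousOn_log.comp (continuous_const.sub continuous_id).continuousOn hmaps)).add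
        continuousOn_const).sub (by fun_prop)
    · intro y hy
      rw [interior_Icc] at hy
      have hy0 : 0 < y := lt_trans hb hy.1
      have hy1 : y < 1 := lt_trans hy.2 hx1
      exact (hasDerivAt_Gf hy0 hy1).hasDerivWithinAt
    · intro y hy
      rw [interior_Icc] at hy
      have hy0 : 0 < y := lt_trans hb hy.1
      have hy1 : y < 1 := lt_trans hy.2 hx1
      have h : 0 < y * (1 - y) := by nlinarith
      rw [div_add_div _ _ (by linarith) (by linarith), sub_nonneg, le_div_iff₀ h]
      nlinarith [sq_nonneg (1 - 2 * y)]
  have h0 : Gf b b = 0 := by unfold Gf; ring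
  have := hmono (Set.left_mem_Icc.2 hbx) (Set.right_mem_Icc.2 hbx) hbx
  rw [h0] at this
  exact this

lemma Ff_nonneg {b a : ℝ} (hb : 0 < b) (hba : b ≤ a) (ha1 : a ≤ 1) : 0 ≤ Ff b a := by
  rcases eq_or_lt_of_le hba with rfl | hba'
  · unfold Ff; ring_nf; simp
  have hb1 : b < 1 := lt_of_lt_of_le hba' ha1
  have hmono : MonotoneOn (Ff b) (Set.Icc b 1) := by
    apply monotoneOn_of_hasDerivWithinAt_nonneg (convex_Icc b 1) (f' := Gf b)
    · unfold Ff
      apply ContinuousOn.sub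
      apply ContinuousOn.add
      · exact (continuousOn_id.mul ((Real.continuousOn_log.mono (by
          intro y hy
          simp only [Set.mem_compl_iff, Set.mem_singleton_iff]
          exact (lt_of_lt_of_le hb hy.1).ne')).sub continuousOn_const))
      · exact (Real.continuous_mul_log.comp (continuous_const.sub continuous_id)).continuousOn.sub
          ((continuous_const.sub continuous_id).continuousOn.mul continuousOn_const)
      · fun_prop
    · intro y hy
      rw [interior_Icc] at hy
      exact (hasDerivAt_Ff (lt_trans hb hy.1) hy.2).hasDerivWithinAt
    · intro y hy
      rw [interior_Icc] at hy
      exact Gf_nonneg hb (le_of_lt hy.1) hy.2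
  have h0 : Ff b b = 0 := by unfold Ff; ring
  have := hmono (Set.left_mem_Icc.2 hb1.le) (Set.mem_Icc.2 ⟨hba, ha1⟩) hba
  rw [h0] at this
  exact this

/-- two point Pinsker inequality -/
lemma two_point_pinsker {b a : ℝ} (hb : 0 < b) (hba : b ≤ a) (ha1 : a ≤ 1) :
    2 * (a - b) ^ 2 ≤ a * Real.log (a / b) + (1 - a) * Real.log ((1 - a) / (1 - b)) := by
  have ha0 : 0 < a := lt_of_lt_of_le hb hba
  have key := Ff_nonneg hb hba ha1
  unfold Ff at key
  rw [Real.log_div ha0.ne' hb.ne']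
  rcases eq_or_lt_of_le ha1 with rfl | ha1'
  · simpa using key
  · rw [Real.log_div (by linarith : (1:ℝ) - a ≠ 0) (by
      have : b < 1 := lt_of_le_of_lt hba ha1'; linarith)]
    nlinarith [key]

lemma log_sum_ineq {ι : Type} [Fintype ι] (P Q : ι → ℝ) (hP : ∀ i, 0 < P i)
    (hQ : ∀ i, 0 < Q i) (S : Finset ι) :
    (∑ i ∈ S, P i) * Real.log ((∑ i ∈ S, P i) / (∑ i ∈ S, Q i))
      ≤ ∑ i ∈ S, P i * Real.log (P i / Q i) := by
  rcases S.eq_empty_or_nonempty with rfl | hS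
  · simp
  have hT : 0 < ∑ i ∈ S, Q i := Finset.sum_pos (fun i _ => hQ i) hS
  have hpS : 0 < ∑ i ∈ S, P i := Finset.sum_pos (fun i _ => hP i) hS
  set T := ∑ i ∈ S, Q i with hTdef
  have hjensen := Real.convexOn_mul_log.map_sum_le
    (t := S) (w := fun i => Q i / T) (p := fun i => P i / Q i)
    (fun i _ => div_nonneg (hQ i).le hT.le)
    (by rw [← Finset.sum_div, ← hTdef, div_self hT.ne'])
    (fun i _ => Set.mem_Ici.2 (div_nonneg (hP i).le (hQ i).le))
  simp only [smul_eq_mul] at hjensen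
  have hpt : ∑ i ∈ S, (Q i / T) * (P i / Q i) = (∑ i ∈ S, P i) / T := by
    rw [Finset.sum_div]
    refine Finset.sum_congr rfl fun i _ => ?_
    have h1 := (hQ i).ne'
    field_simp
  rw [hpt] at hjensen
  have hrhs : ∑ i ∈ S, (Q i / T) * (P i / Q i * Real.log (P i / Q i))
      = (∑ i ∈ S, P i * Real.log (P i / Q i)) / T := by
    rw [Finset.sum_div]
    refine Finset.sum_congr rfl fun i _ => ?_
    have h1 := (hQ i).ne'
    field_simp
  rw [hrhs] at hjensen
  have := mul_le_mul_of_nonneg_left hjensen hT.le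
  rw [mul_div_cancel₀ _ hT.ne'] at this
  calc (∑ i ∈ S, P i) * Real.log ((∑ i ∈ S, P i) / T)
      = T * ((∑ i ∈ S, P i) / T * Real.log ((∑ i ∈ S, P i) / T)) := by
        field_simp
    _ ≤ _ := this

lemma pinsker_finite {ι : Type} [Fintype ι] [Nonempty ι] (P Q : ι → ℝ)
    (hP : ∀ i, 0 < P i) (hQ : ∀ i, 0 < Q i)
    (hPs : ∑ i, P i = 1) (hQs : ∑ i, Q i = 1) :
    (∑ i, |P i - Q i|) ^ 2 ≤ 2 * ∑ i, P i * Real.log (P i / Q i) := by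
  classical
  set A : Finset ι := Finset.univ.filter (fun i => Q i ≤ P i) with hA
  set a := ∑ i ∈ A, P i with ha
  set b := ∑ i ∈ A, Q i with hb
  have hAne : A.Nonempty := by
    by_contra h
    rw [Finset.not_nonempty_iff_eq_empty] at h
    have hall : ∀ i, P i < Q i := by
      intro i
      by_contra hi
      have : i ∈ A := by simp [hA, not_lt.mp hi]
      simp [h] at this
    have : (∑ i, P i) < ∑ i, Q i :=
      Finset.sum_lt_sum_of_nonempty Finset.univ_nonempty fun i _ => hall i
    rw [hPs, hQs] at this; exact lt_irrefl _ this
  have hb0 : 0 < b := Finset.sum_pos (fun i _ => hQ i) hAne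
  have hba : b ≤ a := Finset.sum_le_sum fun i hi => by
    simp [hA] at hi; exact hi
  have ha1 : a ≤ 1 := by
    rw [← hPs]
    exact Finset.sum_le_sum_of_subset_of_nonneg (Finset.subset_univ A)
      (fun i _ _ => (hP i).le)
  have hPc : ∑ i ∈ Aᶜ, P i = 1 - a := by
    have := Finset.sum_add_sum_compl A P
    rw [hPs] at this; linarith
  have hQc : ∑ i ∈ Aᶜ, Q i = 1 - b := by
    have := Finset.sum_add_sum_compl A Q
    rw [hQs] at this; linarith
  have htv : ∑ i, |P i - Q i| = 2 * (a - b) := by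
    rw [← Finset.sum_add_sum_compl A]
    have h1 : ∑ i ∈ A, |P i - Q i| = a - b := by
      rw [ha, hb, ← Finset.sum_sub_distrib]
      refine Finset.sum_congr rfl fun i hi => ?_
      simp only [hA, Finset.mem_filter] at hi
      rw [abs_of_nonneg (by linarith [hi.2])]
    have h2 : ∑ i ∈ Aᶜ, |P i - Q i| = (1 - b) - (1 - a) := by
      rw [← hPc, ← hQc, ← Finset.sum_sub_distrib]
      refine Finset.sum_congr rfl fun i hi => ?_
      simp only [hA, Finset.compl_filter, Finset.mem_filter, not_le] at hi
      rw [abs_of_nonpos (by linarith [hi.2])]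
      ring
    rw [h1, h2]; ring
  have hkl : a * Real.log (a / b) + (1 - a) * Real.log ((1 - a) / (1 - b))
      ≤ ∑ i, P i * Real.log (P i / Q i) := by
    rw [← Finset.sum_add_sum_compl A (fun i => P i * Real.log (P i / Q i))]
    have l1 := log_sum_ineq P Q hP hQ A
    have l2 := log_sum_ineq P Q hP hQ Aᶜ
    rw [hPc, hQc] at l2
    rw [← ha, ← hb] at l1
    linarith
  have h2pt := two_point_pinsker hb0 hba ha1
  rw [htv]
  nlinarith [h2pt, hkl]

/-! ### Measure plumbing -/

lemma productBernoulli_eq {p : ℝ} (hp : p ∈ Set.Ioo (0:ℝ) 1) :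
    productBernoulli α p = ∑ f : α → Bool, ENNReal.ofReal (Pr p f) • Measure.dirac f := by
  unfold productBernoulli
  refine Finset.sum_congr rfl fun f _ => ?_
  congr 1
  calc (∏ a : α, if f a then ENNReal.ofReal p else ENNReal.ofReal (1 - p))
      = ∏ a : α, ENNReal.ofReal (W p (f a)) :=
        Finset.prod_congr rfl fun a _ => by cases h : f a <;> simp [W, h]
    _ = ENNReal.ofReal (Pr p f) :=
        (ENNReal.ofReal_prod_of_nonneg fun a _ => (W_pos hp (f a)).le).symm

lemma apply_sum_smul_dirac {β : Type} [Fintype β] [MeasurableSpace β]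
    [MeasurableSingletonClass β] (c : β → ENNReal) (s : Set β) [DecidablePred (· ∈ s)] :
    (∑ b : β, c b • Measure.dirac b) s = ∑ b : β, if b ∈ s then c b else 0 := by
  rw [Measure.finset_sum_apply]
  refine Finset.sum_congr rfl fun b _ => ?_
  rw [Measure.smul_apply, Measure.dirac_apply, Set.indicator_apply]
  by_cases h : b ∈ s <;> simp [h]

end CPL

set_option maxHeartbeats 2000000 in
open CPL in
theorem coupling_Gnp_Gnq (n : ℕ) (p q : ℝ) (hp : p ∈ Set.Ioo (0:ℝ) 1) (hq : q ∈ Set.Ioo (0:ℝ) 1) :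
    ∃ μ : Measure ((EdgeSet n → Bool) × (EdgeSet n → Bool)),
      IsProbabilityMeasure μ ∧
      μ.map Prod.fst = productBernoulli (EdgeSet n) p ∧
      μ.map Prod.snd = productBernoulli (EdgeSet n) q ∧
      1 - n * |p - q| / Real.sqrt (4 * q * (1 - q)) ≤ (μ {z | z.1 = z.2}).toReal := by
  classical
  set α := EdgeSet n
  -- minimum of the two densities
  set m : (α → Bool) → ℝ := fun f => min (Pr p f) (Pr q f) with hm
  set s : ℝ := ∑ f : α → Bool, m f with hs
  have hmnonneg : ∀ f, 0 ≤ m f := fun f => le_min (Pr_pos hp f).le (Pr_pos hq f).le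
  have hmp : ∀ f, m f ≤ Pr p f := fun f => min_le_left _ _
  have hmq : ∀ f, m f ≤ Pr q f := fun f => min_le_right _ _
  have hs1 : s ≤ 1 := by
    rw [hs, ← sum_Pr (α := α) (p := p)]
    exact Finset.sum_le_sum fun f _ => hmp f
  have hs0 : 0 ≤ s := Finset.sum_nonneg fun f _ => hmnonneg f
  -- coupling weights
  set w : (α → Bool) × (α → Bool) → ℝ := fun z =>
    (if z.1 = z.2 then m z.1 else 0) + (Pr p z.1 - m z.1) * (Pr q z.2 - m z.2) / (1 - s)
    with hw
  have hwnonneg : ∀ z, 0 ≤ w z := by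
    intro z
    rcases eq_or_lt_of_le hs1 with h1 | h1
    · -- s = 1 : residuals are all zero
      have hresp : ∀ f, Pr p f - m f = 0 := by
        intro f
        have : ∑ f : α → Bool, (Pr p f - m f) = 0 := by
          rw [Finset.sum_sub_distrib, sum_Pr, ← hs, h1, sub_self]
        have := (Finset.sum_eq_zero_iff_of_nonneg
          (fun f _ => by linarith [hmp f])).1 this f (Finset.mem_univ f)
        linarith [this]
      rw [hw]
      simp only
      rw [hresp z.1, zero_mul, zero_div, add_zero]
      split
      · exact hmnonneg _
      · exact le_refl 0
    · have : 0 < 1 - s := by linarith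
      have h2 : 0 ≤ (Pr p z.1 - m z.1) * (Pr q z.2 - m z.2) / (1 - s) := by
        apply div_nonneg _ this.le
        exact mul_nonneg (by linarith [hmp z.1]) (by linarith [hmq z.2])
      have h3 : (0:ℝ) ≤ if z.1 = z.2 then m z.1 else 0 := by
        split <;> [exact hmnonneg _; exact le_refl 0]
      rw [hw]; exact add_nonneg h3 h2
  -- row and column sums
  have hressum_p : ∑ f : α → Bool, (Pr p f - m f) = 1 - s := by
    rw [Finset.sum_sub_distrib, sum_Pr, ← hs]
  have hressum_q : ∑ f : α → Bool, (Pr q f - m f) = 1 - s := by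
    rw [Finset.sum_sub_distrib, sum_Pr, ← hs]
  have hrow : ∀ f, ∑ g : α → Bool, w (f, g) = Pr p f := by
    intro f
    rw [hw]
    simp only
    rw [Finset.sum_add_distrib]
    have e1 : ∑ g : α → Bool, (if f = g then m f else 0) = m f := by
      rw [Finset.sum_ite_eq Finset.univ f (fun _ => m f)]
      simp
    have e2 : ∑ g : α → Bool, (Pr p f - m f) * (Pr q g - m g) / (1 - s)
        = (Pr p f - m f) * (1 - s) / (1 - s) := by
      rw [← Finset.sum_div, ← Finset.mul_sum, hressum_q]
    rw [e1, e2]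
    rcases eq_or_lt_of_le hs1 with h1 | h1
    · have : ∑ f : α → Bool, (Pr p f - m f) = 0 := by rw [hressum_p, ← h1, sub_self]
      have hzero := (Finset.sum_eq_zero_iff_of_nonneg
        (fun f _ => by linarith [hmp f])).1 this f (Finset.mem_univ f)
      have : m f = Pr p f := by linarith
      rw [← h1]
      simp [this]
    · have hne : (1:ℝ) - s ≠ 0 := by linarith
      rw [mul_div_assoc, div_self hne, mul_one]
      linarith [hmp f]
  have hcol : ∀ g, ∑ f : α → Bool, w (f, g) = Pr q g := by
    intro g
    rw [hw]
    simp only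
    rw [Finset.sum_add_distrib]
    have e1 : ∑ f : α → Bool, (if f = g then m f else 0) = m g := by
      rw [Finset.sum_ite_eq' Finset.univ g (fun h => m h)]
      simp
    have e2 : ∑ f : α → Bool, (Pr p f - m f) * (Pr q g - m g) / (1 - s)
        = (1 - s) * (Pr q g - m g) / (1 - s) := by
      rw [← Finset.sum_div, ← Finset.sum_mul, hressum_p]
    rw [e1, e2]
    rcases eq_or_lt_of_le hs1 with h1 | h1
    · have : ∑ f : α → Bool, (Pr q f - m f) = 0 := by rw [hressum_q, ← h1, sub_self]
      have hzero := (Finset.sum_eq_zero_iff_of_nonneg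
        (fun f _ => by linarith [hmq f])).1 this g (Finset.mem_univ g)
      have : m g = Pr q g := by linarith
      rw [← h1]
      simp [this]
    · have hne : (1:ℝ) - s ≠ 0 := by linarith
      rw [mul_comm, mul_div_assoc, div_self hne, mul_one]
      linarith [hmq g]
  -- the coupling measure
  set μ : Measure ((α → Bool) × (α → Bool)) :=
    ∑ z : (α → Bool) × (α → Bool), ENNReal.ofReal (w z) • Measure.dirac z with hμ
  have happly : ∀ (S : Set ((α → Bool) × (α → Bool))),
      μ S = ∑ z : (α → Bool) × (α → Bool), if z ∈ S then ENNReal.ofReal (w z) else 0 := by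
    intro S
    rw [hμ, apply_sum_smul_dirac]
  have huniv : μ Set.univ = 1 := by
    rw [happly]
    simp only [Set.mem_univ, if_true]
    rw [ENNReal.ofReal_sum_of_nonneg (fun z _ => hwnonneg z) |>.symm]
    rw [show (∑ z : (α → Bool) × (α → Bool), w z) = 1 by
      rw [Fintype.sum_prod_type]
      simp_rw [hrow]
      exact sum_Pr]
    exact ENNReal.ofReal_one
  refine ⟨μ, ?_, ?_, ?_, ?_⟩
  · exact ⟨huniv⟩
  · -- first marginal
    rw [productBernoulli_eq hp]
    refine Measure.ext fun S hS => ?_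
    rw [Measure.map_apply measurable_fst hS, happly, apply_sum_smul_dirac]
    rw [Fintype.sum_prod_type]
    refine Finset.sum_congr rfl fun f _ => ?_
    by_cases h : f ∈ S
    · simp only [Set.mem_preimage] at *
      have : ∀ g : α → Bool, ((f, g) ∈ Prod.fst ⁻¹' S) = True := fun g => by
        simp [Set.mem_preimage, h]
      simp only [Set.mem_preimage, h, if_true]
      rw [← ENNReal.ofReal_sum_of_nonneg (fun g _ => hwnonneg (f, g)), hrow f]
    · simp only [Set.mem_preimage, h, if_false]
      exact Finset.sum_eq_zero fun g _ => by simp [Set.mem_preimage, h]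
  · -- second marginal
    rw [productBernoulli_eq hq]
    refine Measure.ext fun S hS => ?_
    rw [Measure.map_apply measurable_snd hS, happly, apply_sum_smul_dirac]
    rw [Fintype.sum_prod_type_right]
    refine Finset.sum_congr rfl fun g _ => ?_
    by_cases h : g ∈ S
    · simp only [Set.mem_preimage, h, if_true]
      rw [← ENNReal.ofReal_sum_of_nonneg (fun f _ => hwnonneg (f, g)), hcol g]
    · simp only [Set.mem_preimage, h, if_false]
      exact Finset.sum_eq_zero fun f _ => by simp [Set.mem_preimage, h]
  · -- diagonal mass
    -- first : ENNReal.ofReal s ≤ μ diag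
    have hdiag : ENNReal.ofReal s ≤ μ {z | z.1 = z.2} := by
      rw [happly]
      have step1 : ENNReal.ofReal s = ∑ f : α → Bool, ENNReal.ofReal (m f) := by
        rw [hs]; exact ENNReal.ofReal_sum_of_nonneg fun f _ => hmnonneg f
      simp only [Set.mem_setOf_eq]
      rw [step1, Fintype.sum_prod_type]
      refine Finset.sum_le_sum fun f _ => ?_
      refine le_trans ?_ (Finset.single_le_sum (fun g _ => zero_le) (Finset.mem_univ f))
      rw [if_pos (show ((f, f) : (α → Bool) × (α → Bool)).1 = (f, f).2 from rfl)]
      apply ENNReal.ofReal_le_ofReal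
      rw [hw]
      simp only [if_pos rfl, if_true]
      have hres : 0 ≤ (Pr p f - m f) * (Pr q f - m f) / (1 - s) :=
        div_nonneg (mul_nonneg (sub_nonneg.2 (hmp f)) (sub_nonneg.2 (hmq f)))
          (sub_nonneg.2 hs1)
      linarith
    -- analytic bound : 1 - n|p-q|/√(4q(1-q)) ≤ s
    have hbound : 1 - n * |p - q| / Real.sqrt (4 * q * (1 - q)) ≤ s := by
      have hq0 := hq.1
      have hq1 := hq.2
      have hqq : (0:ℝ) < q * (1 - q) := by nlinarith
      set T : ℝ := ∑ f : α → Bool, |Pr p f - Pr q f| with hT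
      have hT0 : 0 ≤ T := Finset.sum_nonneg fun f _ => abs_nonneg _
      -- Pinsker + chi-square bound
      have hpinsker := pinsker_finite (ι := α → Bool) (Pr p) (Pr q) (Pr_pos hp) (Pr_pos hq)
        (sum_Pr (α := α)) (sum_Pr (α := α))
      rw [KL_tensor hp hq] at hpinsker
      have hklb := kl_le_chi2 hp hq
      have hkl0 : (0:ℝ) ≤ (p - q)^2 / (q * (1 - q)) := by positivity
      have hcard : (Fintype.card α : ℝ) * 2 ≤ (n:ℝ)^2 := by
        have h1 : Fintype.card α = n.choose 2 := by
          have h := Sym2.card_subtype_not_diag (α := Fin n)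
          rw [Fintype.card_fin] at h
          rw [← h]
        have h2 : n.choose 2 * 2 ≤ n^2 := by
          rw [Nat.choose_two_right]
          calc n * (n - 1) / 2 * 2 ≤ n * (n - 1) := Nat.div_mul_le_self _ _
            _ ≤ n * n := Nat.mul_le_mul_left n (Nat.sub_le n 1)
            _ = n^2 := (sq n).symm
        calc (Fintype.card α : ℝ) * 2 = ((n.choose 2 * 2 : ℕ) : ℝ) := by
              rw [h1]; push_cast; ring
          _ ≤ ((n^2 : ℕ) : ℝ) := by exact_mod_cast h2
          _ = (n:ℝ)^2 := by push_cast; ring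
      have hTsq : T^2 ≤ (n:ℝ)^2 * ((p - q)^2 / (q * (1 - q))) := by
        calc T^2 ≤ 2 * ((Fintype.card α : ℝ) * kl p q) := hpinsker
          _ ≤ 2 * ((Fintype.card α : ℝ) * ((p - q)^2 / (q * (1 - q)))) := by
              have : (0:ℝ) ≤ (Fintype.card α : ℝ) := Nat.cast_nonneg _
              nlinarith
          _ ≤ (n:ℝ)^2 * ((p - q)^2 / (q * (1 - q))) := by nlinarith
      set B : ℝ := n * |p - q| / Real.sqrt (q * (1 - q)) with hB
      have hB0 : 0 ≤ B := by positivity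
      have hBsq : B^2 = (n:ℝ)^2 * ((p - q)^2 / (q * (1 - q))) := by
        rw [hB, div_pow, mul_pow, Real.sq_sqrt hqq.le, sq_abs]
        ring
      have hTB : T ≤ B := by
        have h1 : T = Real.sqrt (T^2) := (Real.sqrt_sq hT0).symm
        have h2 : B = Real.sqrt (B^2) := (Real.sqrt_sq hB0).symm
        rw [h1, h2]
        apply Real.sqrt_le_sqrt
        rw [hBsq]; exact hTsq
      -- s = 1 - T/2
      have hsT : s = 1 - T / 2 := by
        have hmin : ∀ f : α → Bool, m f = (Pr p f + Pr q f - |Pr p f - Pr q f|) / 2 := by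
          intro f
          rcases le_total (Pr p f) (Pr q f) with h | h
          · rw [hm]
            simp only [min_eq_left h, abs_of_nonpos (by linarith : Pr p f - Pr q f ≤ 0)]
            ring
          · rw [hm]
            simp only [min_eq_right h, abs_of_nonneg (by linarith : 0 ≤ Pr p f - Pr q f)]
            ring
        rw [hs]
        simp_rw [hmin]
        rw [← Finset.sum_div, Finset.sum_sub_distrib, Finset.sum_add_distrib,
          sum_Pr, sum_Pr, ← hT]
        ring
      -- rewrite the square root
      have hsqrt4 : Real.sqrt (4 * q * (1 - q)) = 2 * Real.sqrt (q * (1 - q)) := by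
        rw [show 4 * q * (1 - q) = 2^2 * (q * (1 - q)) by ring,
          Real.sqrt_mul (by positivity), Real.sqrt_sq (by norm_num : (0:ℝ) ≤ 2)]
      have hsqrtpos : 0 < Real.sqrt (q * (1 - q)) := Real.sqrt_pos.2 hqq
      have : n * |p - q| / Real.sqrt (4 * q * (1 - q)) = B / 2 := by
        rw [hsqrt4, hB]
        field_simp
      rw [this, hsT]
      linarith
    -- conclude
    have hμfin : μ {z | z.1 = z.2} ≤ 1 :=
      (measure_mono (Set.subset_univ _)).trans huniv.le
    calc 1 - n * |p - q| / Real.sqrt (4 * q * (1 - q)) ≤ s := hbound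
      _ = (ENNReal.ofReal s).toReal := (ENNReal.toReal_ofReal hs0).symm
      _ ≤ (μ {z | z.1 = z.2}).toReal := by
          apply ENNReal.toReal_mono _ hdiag
          exact (lt_of_le_of_lt hμfin ENNReal.one_lt_top).ne
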